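/- Let n be a finite type and (Ω, ℙ) a probability space. Let X : Ω → Matrix n n ℂ be entrywise measurable with X ω positive semidefinite for every ω and each entry integrable, and let E[X] denote the matrix with entries E[X] i j = ∫ X ω i j dℙ(ω). Let η ∈ (0,1) be such that (1−η) • 1 − E[X] is positive semidefinite (E[X] ≤ (1−η)·1 in the Loewner order). Let P : Ω → Matrix n n ℂ be such that for every ω, P ω is an orthogonal projection and (1 − P ω) * X ω * (1 − P ω) − (1 − P ω) is positive semidefinite (P ω is a pruning projector for X ω), and assume ω ↦ Re Tr(1 − P ω) and ω ↦ ‖X ω − E[X]‖₁ are integrable. Then ∫ Re Tr(1 − P ω) dℙ(ω) ≤ (1/η) · ∫ ‖X ω − E[X]‖₁ dℙ(ω). -/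

import Mathlib

open Matrix MeasureTheory
open scoped ComplexOrder

/-- Positive semidefinite square root, extended to a total function
(it agrees with `Matrix.PosSemidef.sqrt` on positive semidefinite matrices). -/
noncomputable def psqrt {n : Type*} [Fintype n] [DecidableEq n] (A : Matrix n n ℂ) :
    Matrix n n ℂ :=
  open scoped Classical in
  if h : A.PosSemidef then
    (h.1.eigenvectorUnitary : Matrix n n ℂ) * diagonal ((↑) ∘ (√·) ∘ h.1.eigenvalues) *
      (star h.1.eigenvectorUnitary : Matrix n n ℂ)
  else 0

/-- The trace norm ‖A‖₁ = Re Tr √(AᴴA). -/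
noncomputable def traceNorm {n : Type*} [Fintype n] [DecidableEq n] (A : Matrix n n ℂ) : ℝ :=
  (psqrt (Aᴴ * A)).trace.re

section aux

variable {n : Type*} [Fintype n] [DecidableEq n]

open scoped MatrixOrder

lemma psqrt_eq_cfc_sqrt {A : Matrix n n ℂ} (h : A.PosSemidef) : psqrt A = CFC.sqrt A := by
  rw [psqrt, dif_pos h, CFC.sqrt_eq_cfc, cfc_nnreal_eq_real _ A, h.1.cfc_eq, IsHermitian.cfc,
    Unitary.conjStarAlgAut_apply]
  congr 3
  funext i
  simp [Real.coe_toNNReal', max_eq_left (h.eigenvalues_nonneg i)]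

lemma retrace_nonneg {A : Matrix n n ℂ} (hA : A.PosSemidef) : 0 ≤ A.trace.re := by
  rw [Matrix.trace, Complex.re_sum]
  refine Finset.sum_nonneg fun i _ => ?_
  have := hA.re_dotProduct_nonneg (Pi.single i 1)
  simpa [dotProduct, mulVec, Pi.single_apply, Finset.sum_ite_eq] using this

omit [DecidableEq n] in
lemma proj_psd {Q : Matrix n n ℂ} (h1 : Qᴴ = Q) (h2 : Q * Q = Q) : Q.PosSemidef := by
  have : Q = Qᴴ * Q := by rw [h1, h2]
  rw [this]
  exact posSemidef_conjTranspose_mul_self Q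

lemma trace_conj_proj_le {A Q : Matrix n n ℂ} (hA : A.PosSemidef)
    (h1 : Qᴴ = Q) (h2 : Q * Q = Q) : (Q * A * Q).trace.re ≤ A.trace.re := by
  set S := CFC.sqrt A with hSdef
  have hS : S.PosSemidef := (CFC.sqrt_nonneg A).posSemidef
  have hSH : Sᴴ = S := hS.1
  have hSS : S * S = A := CFC.sqrt_mul_sqrt_self A hA.nonneg
  have hproj' : ((1 : Matrix n n ℂ) - Q).PosSemidef := by
    refine proj_psd (by simp [h1]) ?_
    simp [sub_mul, mul_sub, h2]
  have hpsd : (S * (1 - Q) * S).PosSemidef := by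
    have := hproj'.mul_mul_conjTranspose_same S
    rwa [hSH] at this
  have e1 : S * (1 - Q) * S = S * S - S * Q * S := by noncomm_ring
  have e2 : (S * Q * S).trace = (Q * A * Q).trace := by
    rw [trace_mul_cycle S Q S, trace_mul_cycle Q A Q, h2, ← hSS, ← mul_assoc,
      trace_mul_comm, ← mul_assoc]
  have := retrace_nonneg hpsd
  rw [e1, trace_sub, e2, hSS, Complex.sub_re] at this
  linarith

lemma retrace_conj_le_traceNorm {M Q : Matrix n n ℂ} (hM : M.IsHermitian)
    (h1 : Qᴴ = Q) (h2 : Q * Q = Q) :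
    (Q * M * Q).trace.re ≤ traceNorm M := by
  rw [traceNorm]
  set U : Matrix n n ℂ := (hM.eigenvectorUnitary : Matrix n n ℂ) with hUdef
  set lam := hM.eigenvalues with hlamdef
  have hU1 : star U * U = 1 := Matrix.mem_unitaryGroup_iff'.mp (hM.eigenvectorUnitary).2
  have hU2 : U * star U = 1 := Matrix.mem_unitaryGroup_iff.mp (hM.eigenvectorUnitary).2
  have hcancel : ∀ x : Matrix n n ℂ, star U * (U * x) = x := fun x => by
    rw [← mul_assoc, hU1, one_mul]
  -- conjugation facts
  have traceU : ∀ d : n → ℂ, (U * diagonal d * star U).trace = ∑ i, d i := by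
    intro d
    rw [trace_mul_comm, ← mul_assoc, hU1, one_mul, trace_diagonal]
  have psdU : ∀ d : n → ℝ, (∀ i, 0 ≤ d i) →
      (U * diagonal (fun i => (d i : ℂ)) * star U).PosSemidef := by
    intro d hd
    have hdiag : (diagonal (fun i => (d i : ℂ))).PosSemidef :=
      Matrix.posSemidef_diagonal_iff.mpr fun i => by
        simpa using Complex.zero_le_real.mpr (hd i)
    have := hdiag.mul_mul_conjTranspose_same U
    rwa [← star_eq_conjTranspose] at this
  have mulU : ∀ d e : n → ℂ, (U * diagonal d * star U) * (U * diagonal e * star U)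
      = U * diagonal (fun i => d i * e i) * star U := by
    intro d e
    have h : (U * diagonal d * star U) * (U * diagonal e * star U)
        = U * (diagonal d * (star U * U) * diagonal e) * star U := by noncomm_ring
    rw [h, hU1, mul_one, diagonal_mul_diagonal]
  have hspec : M = U * diagonal (fun i => (lam i : ℂ)) * star U := by
    simpa [Function.comp_def] using hM.spectral_theorem
  set A := U * diagonal (fun i => ((max (lam i) 0 : ℝ) : ℂ)) * star U with hAdef
  set B := U * diagonal (fun i => ((max (-lam i) 0 : ℝ) : ℂ)) * star U with hBdef
  set C := U * diagonal (fun i => ((|lam i| : ℝ) : ℂ)) * star U with hCdef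
  have hApsd : A.PosSemidef := psdU _ fun i => le_max_right _ _
  have hBpsd : B.PosSemidef := psdU _ fun i => le_max_right _ _
  have hCpsd : C.PosSemidef := psdU _ fun i => abs_nonneg _
  have hMAB : M = A - B := by
    have hd : (fun i => ((max (lam i) 0 : ℝ) : ℂ) - ((max (-lam i) 0 : ℝ) : ℂ))
        = fun i => ((lam i : ℝ) : ℂ) := by
      funext i
      rw [← Complex.ofReal_sub, max_zero_sub_max_neg_zero_eq_self]
    rw [hspec, hAdef, hBdef, ← sub_mul, ← mul_sub, diagonal_sub, hd]
  have hCsq : C ^ 2 = Mᴴ * M := by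
    have habs : (fun i => ((|lam i| : ℝ) : ℂ) * ((|lam i| : ℝ) : ℂ))
        = fun i => ((lam i : ℝ) : ℂ) * ((lam i : ℝ) : ℂ) := by
      funext i
      rw [← Complex.ofReal_mul, ← Complex.ofReal_mul, abs_mul_abs_self]
    rw [hM.eq, pow_two, hCdef, mulU, hspec, mulU, habs]
  have hpsdMM : (Mᴴ * M).PosSemidef := posSemidef_conjTranspose_mul_self M
  have hCeq : psqrt (Mᴴ * M) = C := by
    rw [psqrt_eq_cfc_sqrt hpsdMM, CFC.sqrt_eq_iff _ _ hpsdMM.nonneg hCpsd.nonneg, ← hCsq, pow_two]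
  rw [hCeq]
  -- split Q M Q
  have hsplit : Q * M * Q = Q * A * Q - Q * B * Q := by rw [hMAB]; noncomm_ring
  have hQBQ : 0 ≤ (Q * B * Q).trace.re := by
    refine retrace_nonneg ?_
    have := hBpsd.mul_mul_conjTranspose_same Q
    rwa [h1] at this
  have hQAQ : (Q * A * Q).trace.re ≤ A.trace.re := trace_conj_proj_le hApsd h1 h2
  have hAC : A.trace.re ≤ C.trace.re := by
    rw [hAdef, hCdef, traceU, traceU, Complex.re_sum, Complex.re_sum]
    refine Finset.sum_le_sum fun i _ => ?_
    simp only [Complex.ofReal_re]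
    exact max_le (le_abs_self _) (abs_nonneg _)
  rw [hsplit, trace_sub, Complex.sub_re]
  linarith

end aux

/-- The Pruning Trace Inequality (Lemma 4 of the paper): if `E[X] ≤ (1-η)·1` and, for
each `ω`, `P ω` is a pruning projector for the positive semidefinite matrix `X ω`, then
`E[Tr(1 - P)] ≤ (1/η) E[‖X - E[X]‖₁]`. -/
theorem pruning_trace_inequality
    {n : Type*} [Fintype n] [DecidableEq n]
    {Ω : Type*} [MeasurableSpace Ω] (Pr : Measure Ω) [IsProbabilityMeasure Pr]
    (X : Ω → Matrix n n ℂ)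
    (hXmeas : ∀ i j, Measurable fun ω => X ω i j)
    (hXint : ∀ i j, Integrable (fun ω => X ω i j) Pr)
    (hXpsd : ∀ ω, (X ω).PosSemidef)
    (η : ℝ) (hη : η ∈ Set.Ioo (0 : ℝ) 1)
    (hEX : ((1 - η) • (1 : Matrix n n ℂ) -
        Matrix.of fun i j => ∫ ω, X ω i j ∂Pr).PosSemidef)
    (P : Ω → Matrix n n ℂ)
    (hP : ∀ ω, (P ω)ᴴ = P ω ∧ P ω * P ω = P ω)
    (hprune : ∀ ω, (((1 : Matrix n n ℂ) - P ω) * X ω * ((1 : Matrix n n ℂ) - P ω) -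
        ((1 : Matrix n n ℂ) - P ω)).PosSemidef)
    (hint1 : Integrable (fun ω => (((1 : Matrix n n ℂ) - P ω).trace).re) Pr)
    (hint2 : Integrable
      (fun ω => traceNorm (X ω - Matrix.of fun i j => ∫ ω', X ω' i j ∂Pr)) Pr) :
    ∫ ω, (((1 : Matrix n n ℂ) - P ω).trace).re ∂Pr ≤
      (1 / η) * ∫ ω, traceNorm (X ω - Matrix.of fun i j => ∫ ω', X ω' i j ∂Pr) ∂Pr := by
  obtain ⟨hη0, hη1⟩ := hη
  set EX : Matrix n n ℂ := Matrix.of fun i j => ∫ ω, X ω i j ∂Pr with hEXdef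
  have hsmulherm : (((1 : ℝ) - η) • (1 : Matrix n n ℂ)).IsHermitian := by
    ext i j
    simp only [Matrix.conjTranspose_apply, Matrix.smul_apply, Matrix.one_apply]
    by_cases h : i = j <;> simp [h, eq_comm]
  have hEXherm : EX.IsHermitian := by
    have := hsmulherm.sub hEX.1
    simpa using this
  have hpt : ∀ ω, η * ((1 : Matrix n n ℂ) - P ω).trace.re
      ≤ traceNorm (X ω - EX) := by
    intro ω
    set Q := (1 : Matrix n n ℂ) - P ω with hQdef
    have hQ1 : Qᴴ = Q := by
      rw [hQdef, conjTranspose_sub, conjTranspose_one, (hP ω).1]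
    have hQ2 : Q * Q = Q := by
      rw [hQdef]; simp [sub_mul, mul_sub, (hP ω).2]
    have hs1 : Q.trace.re ≤ (Q * X ω * Q).trace.re := by
      have := retrace_nonneg (hprune ω)
      rw [trace_sub, Complex.sub_re] at this
      linarith
    have hs2 : (Q * EX * Q).trace.re ≤ (1 - η) * Q.trace.re := by
      have hpsd := hEX.mul_mul_conjTranspose_same Q
      rw [hQ1] at hpsd
      have he : Q * ((1 - η) • (1 : Matrix n n ℂ) - EX) * Q
          = (1 - η) • Q - Q * EX * Q := by
        rw [mul_sub Q ((1 - η) • (1 : Matrix n n ℂ)) EX,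
          sub_mul (Q * ((1 - η) • (1 : Matrix n n ℂ))) (Q * EX) Q,
          mul_smul_comm, mul_one, smul_mul_assoc, hQ2]
      have := retrace_nonneg hpsd
      rw [he, trace_sub, trace_smul, Complex.sub_re, Complex.smul_re,
        smul_eq_mul] at this
      linarith
    have hMherm : (X ω - EX).IsHermitian := (hXpsd ω).1.sub hEXherm
    have hs3 := retrace_conj_le_traceNorm hMherm hQ1 hQ2
    have hsplit : Q * (X ω - EX) * Q = Q * X ω * Q - Q * EX * Q := by noncomm_ring
    rw [hsplit, trace_sub, Complex.sub_re] at hs3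
    linarith
  have hmono : ∫ ω, η * ((1 : Matrix n n ℂ) - P ω).trace.re ∂Pr
      ≤ ∫ ω, traceNorm (X ω - EX) ∂Pr :=
    integral_mono (hint1.const_mul η) hint2 hpt
  rw [integral_const_mul] at hmono
  calc ∫ ω, ((1 : Matrix n n ℂ) - P ω).trace.re ∂Pr
      = (1 / η) * (η * ∫ ω, ((1 : Matrix n n ℂ) - P ω).trace.re ∂Pr) := by
        field_simp
    _ ≤ (1 / η) * ∫ ω, traceNorm (X ω - EX) ∂Pr := by
        apply mul_le_mul_of_nonneg_left hmono (by positivity)
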